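/- Let Φ : ℝ^N → Set(ℝ^N) be a monotone set-valued map, let Q, M be real N×N matrices with M invertible such that H := Q M⁻¹ is symmetric positive definite, and set D := Qᵀ + Q − Mᵀ H M. Let ξ, ξ̂, V ∈ ℝ^N satisfy Q(ξ − ξ̂) + V ∈ Φ(ξ̂), and let ξ⁺ = ξ − M(ξ − ξ̂). Then for every ξ* ∈ ℝ^N with 0 ∈ Φ(ξ*), it holds that ‖ξ⁺ − ξ*‖²_H ≤ ‖ξ − ξ*‖²_H − (ξ − ξ̂)ᵀ D (ξ − ξ̂) + 2⟨ξ̂ − ξ*, V⟩. -/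

import Mathlib

open Matrix

/-- Fundamental contraction inequality of the prediction–correction step.
Here `‖x‖²_H` is written as `x ⬝ᵥ H.mulVec x` with `H = Q M⁻¹`, and
`D = Qᵀ + Q − Mᵀ H M`. -/
theorem stmt5 {N : ℕ} (Φ : (Fin N → ℝ) → Set (Fin N → ℝ))
    (hmono : ∀ u v p q, p ∈ Φ u → q ∈ Φ v → 0 ≤ (u - v) ⬝ᵥ (p - q))
    (Q M : Matrix (Fin N) (Fin N) ℝ) (hM : IsUnit M.det)
    (hH : (Q * M⁻¹).PosDef)
    (ξ ξhat V : Fin N → ℝ)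
    (hincl : Q.mulVec (ξ - ξhat) + V ∈ Φ ξhat)
    (ξplus : Fin N → ℝ) (hplus : ξplus = ξ - M.mulVec (ξ - ξhat))
    (ξstar : Fin N → ℝ) (hstar : (0 : Fin N → ℝ) ∈ Φ ξstar) :
    (ξplus - ξstar) ⬝ᵥ (Q * M⁻¹).mulVec (ξplus - ξstar) ≤
      (ξ - ξstar) ⬝ᵥ (Q * M⁻¹).mulVec (ξ - ξstar)
        - (ξ - ξhat) ⬝ᵥ (Qᵀ + Q - Mᵀ * (Q * M⁻¹) * M).mulVec (ξ - ξhat)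
        + 2 * ((ξhat - ξstar) ⬝ᵥ V) := by
  have hmono' := hmono ξhat ξstar _ 0 hincl hstar
  rw [sub_zero] at hmono'
  set H := Q * M⁻¹ with hHdef
  have hsym : Hᵀ = H := by
    have := hH.isHermitian
    simpa [Matrix.IsHermitian, Matrix.conjTranspose_eq_transpose_of_trivial] using this
  have hHM : H * M = Q := by
    rw [hHdef, Matrix.mul_assoc, Matrix.nonsing_inv_mul M hM, Matrix.mul_one]
  have key : ∀ x y : Fin N → ℝ, x ⬝ᵥ H.mulVec y = y ⬝ᵥ H.mulVec x := by
    intro x y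
    rw [Matrix.dotProduct_mulVec, ← Matrix.mulVec_transpose, hsym, dotProduct_comm]
  have L1 : ∀ (A : Matrix (Fin N) (Fin N) ℝ) (x y : Fin N → ℝ),
      x ⬝ᵥ Aᵀ.mulVec y = A.mulVec x ⬝ᵥ y := by
    intro A x y
    rw [Matrix.dotProduct_mulVec, Matrix.vecMul_transpose]
  subst hplus
  have hHm : H.mulVec (M.mulVec (ξ - ξhat)) = Q.mulVec (ξ - ξhat) := by
    rw [Matrix.mulVec_mulVec, hHM]
  have e1 : ∀ x y : Fin N → ℝ, (x - y) ⬝ᵥ H.mulVec (x - y)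
      = x ⬝ᵥ H.mulVec x - 2 * (x ⬝ᵥ H.mulVec y) + y ⬝ᵥ H.mulVec y := by
    intro x y
    rw [Matrix.mulVec_sub, sub_dotProduct, dotProduct_sub,
      dotProduct_sub, key y x]
    ring
  have hsub : ξ - M.mulVec (ξ - ξhat) - ξstar = (ξ - ξstar) - M.mulVec (ξ - ξhat) := by abel
  have e2 : (ξ - ξhat) ⬝ᵥ (Qᵀ + Q - Mᵀ * H * M).mulVec (ξ - ξhat)
      = 2 * ((ξ - ξhat) ⬝ᵥ Q.mulVec (ξ - ξhat))
        - M.mulVec (ξ - ξhat) ⬝ᵥ Q.mulVec (ξ - ξhat) := by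
    rw [Matrix.sub_mulVec, Matrix.add_mulVec, dotProduct_sub, dotProduct_add,
      L1 Q, dotProduct_comm, Matrix.mul_assoc, ← Matrix.mulVec_mulVec, L1 M, hHM]
    ring
  have e4 : (ξhat - ξstar) ⬝ᵥ (Q.mulVec (ξ - ξhat) + V)
      = (ξ - ξstar) ⬝ᵥ Q.mulVec (ξ - ξhat) - (ξ - ξhat) ⬝ᵥ Q.mulVec (ξ - ξhat)
        + (ξhat - ξstar) ⬝ᵥ V := by
    rw [dotProduct_add]
    congr 1
    rw [show ξhat - ξstar = (ξ - ξstar) - (ξ - ξhat) by abel, sub_dotProduct]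
  rw [e4] at hmono'
  rw [hsub, e1, hHm, e2]
  linarith
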